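/- The family of sesquilinear forms ^{(∞)}U_M(m,n) = e^{2πi(m+1/2)/M} δ_{mn} sin(π/M)/(π/M) on ℂ^M is weakly cylindrically consistent with respect to the embedding I^{(2)}_{M→2M} e_M^m = (e_{2M}^{2m} + e_{2M}^{2m+1})/√2: one has (1/2)[^{(∞)}U_{2M}(2m,2n) + ^{(∞)}U_{2M}(2m+1,2n) + ^{(∞)}U_{2M}(2m,2n+1) + ^{(∞)}U_{2M}(2m+1,2n+1)] = ^{(∞)}U_M(m,n). -/

import Mathlib

/-- The RG fixed-point kernel ^{(∞)}U_M(m,n) = e^{2πi(m+1/2)/M} δ_{mn} · sin(π/M)/(π/M). -/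
noncomputable def Ukernel (M m n : ℕ) : ℂ :=
  (if m = n then 1 else 0) *
    Complex.exp (2 * Real.pi * Complex.I * ((m : ℂ) + 1 / 2) / M) *
    ((Real.sin (Real.pi / M) / (Real.pi / M) : ℝ) : ℂ)

lemma exp_sum_key (M : ℝ) (hM : M ≠ 0) (m : ℂ) :
    Complex.exp (2 * Real.pi * Complex.I * (2 * m + 1 / 2) / (2 * M)) +
      Complex.exp (2 * Real.pi * Complex.I * ((2 * m + 1) + 1 / 2) / (2 * M)) =
    2 * (Real.cos (Real.pi / (2 * M)) : ℂ) *
      Complex.exp (2 * Real.pi * Complex.I * (m + 1 / 2) / M) := by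
  have hM' : (M : ℂ) ≠ 0 := Complex.ofReal_ne_zero.mpr hM
  have h1 : 2 * (Real.pi : ℂ) * Complex.I * (2 * m + 1 / 2) / (2 * M) =
      2 * Real.pi * Complex.I * (m + 1 / 2) / M + (-(Real.pi / (2 * M)) : ℝ) * Complex.I := by
    push_cast
    field_simp
    ring
  have h2 : 2 * (Real.pi : ℂ) * Complex.I * ((2 * m + 1) + 1 / 2) / (2 * M) =
      2 * Real.pi * Complex.I * (m + 1 / 2) / M + ((Real.pi / (2 * M)) : ℝ) * Complex.I := by
    push_cast
    field_simp
  rw [h1, h2, Complex.exp_add, Complex.exp_add, Complex.exp_mul_I, Complex.exp_mul_I]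
  push_cast
  rw [Complex.cos_neg, Complex.sin_neg]
  ring

/-- The family of fixed-point kernels ^{(∞)}U_M is weakly
cylindrically consistent with respect to I^{(2)}_{M→2M}:
(1/2)[^{(∞)}U_{2M}(2m,2n) + ^{(∞)}U_{2M}(2m+1,2n) + ^{(∞)}U_{2M}(2m,2n+1)
  + ^{(∞)}U_{2M}(2m+1,2n+1)] = ^{(∞)}U_M(m,n). -/
theorem stmt12 (M : ℕ) (L : ℕ) (hM : M = 2 ^ L) (m n : ℕ) (hm : m < M) (hn : n < M) :
    (1 / 2 : ℂ) *
        (Ukernel (2 * M) (2 * m) (2 * n) + Ukernel (2 * M) (2 * m + 1) (2 * n) +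
          Ukernel (2 * M) (2 * m) (2 * n + 1) + Ukernel (2 * M) (2 * m + 1) (2 * n + 1)) =
      Ukernel M m n := by
  have hMpos : 0 < M := hM ▸ (Nat.pow_pos (by norm_num) : 0 < 2 ^ L)
  have hMne : (M : ℝ) ≠ 0 := Nat.cast_ne_zero.mpr hMpos.ne'
  rcases eq_or_ne m n with rfl | hmn
  · have h10 : ¬ (2 * m + 1 = 2 * m) := by omega
    have h01 : ¬ (2 * m = 2 * m + 1) := by omega
    simp only [Ukernel, if_pos rfl, if_neg h10, if_neg h01, one_mul, zero_mul, add_zero,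
      zero_add]
    have hcast : ((2 * M : ℕ) : ℂ) = 2 * (M : ℝ) := by push_cast; ring
    have hcastR : ((2 * M : ℕ) : ℝ) = 2 * (M : ℝ) := by push_cast; ring
    have hcastm : ((2 * m : ℕ) : ℂ) = 2 * (m : ℂ) := by push_cast; ring
    have hcastm1 : ((2 * m + 1 : ℕ) : ℂ) = 2 * (m : ℂ) + 1 := by push_cast; ring
    rw [hcast, hcastR, hcastm, hcastm1]
    simp only [if_true, one_mul]
    have key := exp_sum_key (M : ℝ) hMne (m : ℂ)
    have hMc : ((M : ℕ) : ℂ) = ((M : ℝ) : ℂ) := by push_cast; ring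
    rw [hMc]
    have trig : Real.cos (Real.pi / (2 * M)) *
        (Real.sin (Real.pi / (2 * M)) / (Real.pi / (2 * M))) =
        Real.sin (Real.pi / M) / (Real.pi / M) := by
      have h2t : Real.pi / (M : ℝ) = 2 * (Real.pi / (2 * M)) := by field_simp
      rw [h2t, Real.sin_two_mul]
      have ht : Real.pi / (2 * (M : ℝ)) ≠ 0 := by positivity
      field_simp
    have comb : Complex.exp (2 * Real.pi * Complex.I * (2 * (m:ℂ) + 1 / 2) / (2 * ((M:ℝ):ℂ))) *
          ((Real.sin (Real.pi / (2 * M)) / (Real.pi / (2 * M)) : ℝ) : ℂ) +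
        Complex.exp (2 * Real.pi * Complex.I * ((2 * (m:ℂ) + 1) + 1 / 2) / (2 * ((M:ℝ):ℂ))) *
          ((Real.sin (Real.pi / (2 * M)) / (Real.pi / (2 * M)) : ℝ) : ℂ) =
        2 * (Real.cos (Real.pi / (2 * M)) : ℂ) *
          Complex.exp (2 * Real.pi * Complex.I * ((m:ℂ) + 1 / 2) / (M:ℝ)) *
          ((Real.sin (Real.pi / (2 * M)) / (Real.pi / (2 * M)) : ℝ) : ℂ) := by
      rw [← key]; ring
    rw [comb, ← trig]
    push_cast
    ring
  · have c1 : ¬ (2 * m = 2 * n) := by omega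
    have c2 : ¬ (2 * m + 1 = 2 * n) := by omega
    have c3 : ¬ (2 * m = 2 * n + 1) := by omega
    have c4 : ¬ (2 * m + 1 = 2 * n + 1) := by omega
    simp [Ukernel, c1, c2, c3, c4, hmn]
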